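/- Let (A_{ij}), (B_{ij}), ψ be a perfect strategy for the 3×3 quantum magic square game of local dimensions (d_A,d_B). Then the Schmidt rank of ψ is at least 4; that is, writing ψ = Σ_{p=1}^{d_A} Σ_{q=1}^{d_B} M_{pq} e_p ⊗ f_q in the standard bases, the d_A×d_B matrix M has rank at least 4. -/

import Mathlib

open Matrix Kronecker

/-- An `m × n` quantum magic rectangle strategy: Alice's observables `A i j` are Hermitian
unitaries commuting within each row with each row product `I`; Bob's observables `B i j` are
Hermitian unitaries commuting within each column with each column product `-I`; `ψ` is a unit
vector in the (Kronecker) tensor product; and the strategy is perfect: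
`⟨ψ, (A i j ⊗ B i j) ψ⟩ = 1` for all cells `(i, j)`. -/
def IsPerfectStrategy {m n : ℕ} {ιA ιB : Type*}
    [Fintype ιA] [DecidableEq ιA] [Fintype ιB] [DecidableEq ιB]
    (A : Fin m → Fin n → Matrix ιA ιA ℂ)
    (B : Fin m → Fin n → Matrix ιB ιB ℂ)
    (ψ : ιA × ιB → ℂ) : Prop :=
  (∀ i j, (A i j).IsHermitian) ∧
  (∀ i j, A i j * A i j = 1) ∧
  (∀ i j j', A i j * A i j' = A i j' * A i j) ∧
  (∀ i, (List.ofFn fun j => A i j).prod = 1) ∧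
  (∀ i j, (B i j).IsHermitian) ∧
  (∀ i j, B i j * B i j = 1) ∧
  (∀ i i' j, B i j * B i' j = B i' j * B i j) ∧
  (∀ j, (List.ofFn fun i => B i j).prod = -1) ∧
  star ψ ⬝ᵥ ψ = 1 ∧
  (∀ i j, star ψ ⬝ᵥ ((A i j ⊗ₖ B i j) *ᵥ ψ) = 1)


lemma star_dot_self_zero {n : Type*} [Fintype n] {v : n → ℂ} (h : star v ⬝ᵥ v = 0) : v = 0 := by
  have h2 : ∑ i, Complex.normSq (v i) = 0 := by
    have : ((∑ i, Complex.normSq (v i) : ℝ) : ℂ) = star v ⬝ᵥ v := by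
      simp [dotProduct, Complex.normSq_eq_conj_mul_self, Pi.star_apply]
    rw [h] at this
    exact_mod_cast this
  funext i
  have := (Finset.sum_eq_zero_iff_of_nonneg (fun i _ => Complex.normSq_nonneg (v i))).mp h2 i
    (Finset.mem_univ i)
  exact Complex.normSq_eq_zero.mp this

lemma fix_of_inner_one {n : Type*} [Fintype n] [DecidableEq n] {U : Matrix n n ℂ} {ψ : n → ℂ}
    (hU : Uᴴ * U = 1) (hH : Uᴴ = U) (hψ : star ψ ⬝ᵥ ψ = 1)
    (h1 : star ψ ⬝ᵥ (U *ᵥ ψ) = 1) : U *ᵥ ψ = ψ := by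
  have key : star (U *ᵥ ψ - ψ) ⬝ᵥ (U *ᵥ ψ - ψ) = 0 := by
    have e1 : star (U *ᵥ ψ) ⬝ᵥ (U *ᵥ ψ) = 1 := by
      rw [star_mulVec, ← dotProduct_mulVec, mulVec_mulVec, hU, one_mulVec, hψ]
    have e2 : star (U *ᵥ ψ) ⬝ᵥ ψ = 1 := by
      rw [star_mulVec, ← dotProduct_mulVec, hH, h1]
    have : star (U *ᵥ ψ - ψ) = star (U *ᵥ ψ) - star ψ := by
      funext i; simp
    rw [this, sub_dotProduct, dotProduct_sub, dotProduct_sub, e1, e2, h1, hψ]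
    ring
  exact sub_eq_zero.mp (star_dot_self_zero key)


lemma kron_conjT {m n : Type*} [Fintype m] [Fintype n] (A : Matrix m m ℂ) (B : Matrix n n ℂ) :
    (A ⊗ₖ B)ᴴ = Aᴴ ⊗ₖ Bᴴ := by
  ext ⟨p, q⟩ ⟨p', q'⟩
  simp [conjTranspose_apply, mul_comm]

lemma kron_mulVec {dA dB : ℕ} (A : Matrix (Fin dA) (Fin dA) ℂ) (B : Matrix (Fin dB) (Fin dB) ℂ)
    (ψ : Fin dA × Fin dB → ℂ) (p : Fin dA) (q : Fin dB) :
    ((A ⊗ₖ B) *ᵥ ψ) (p, q) = (A * (Matrix.of fun p q => ψ (p, q)) * Bᵀ) p q := by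
  simp only [mulVec, dotProduct, Matrix.mul_apply, Fintype.sum_prod_type, kroneckerMap_apply,
    Matrix.of_apply, transpose_apply, Finset.sum_mul, Finset.mul_sum]
  rw [Finset.sum_comm]
  exact Finset.sum_congr rfl fun q' _ => Finset.sum_congr rfl fun p' _ => by ring


lemma sq_cancel {R : Type*} [Monoid R] {x : R} (hx : x * x = 1) (y : R) : x * (x * y) = y := by
  rw [← mul_assoc, hx, one_mul]

lemma cancel_right {R : Type*} [Monoid R] {x p q : R} (hx : x * x = 1) (h : p * x = q * x) :
    p = q := by
  calc p = (p * x) * x := by rw [mul_assoc, hx, mul_one]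
    _ = (q * x) * x := by rw [h]
    _ = q := by rw [mul_assoc, hx, mul_one]

lemma solve3 {R : Type*} [Monoid R] {x y z w : R} (hx : x * x = 1) (hy : y * y = 1)
    (hxyz : x * (y * z) = w) : z = y * (x * w) := by
  calc z = (y * y) * z := by rw [hy, one_mul]
    _ = y * (x * (x * (y * z))) := by rw [sq_cancel hx, ← mul_assoc, hy, one_mul]
    _ = y * (x * w) := by rw [hxyz]

lemma magic_core {R : Type*} [Ring R] {a b c d e f g h k : R}
    (sa : a*a = 1) (sb : b*b = 1) (sc : c*c = 1) (sd : d*d = 1) (se : e*e = 1) (sf : f*f = 1)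
    (sg : g*g = 1) (sh : h*h = 1)
    (cab : a*b = b*a) (cad : a*d = d*a) (cde : d*e = e*d) (cgh : g*h = h*g)
    (r0 : a*b*c = 1) (r1 : d*e*f = 1) (r2 : g*h*k = 1)
    (c0 : a*d*g = -1) (c1 : b*e*h = -1) (c2 : c*f*k = -1) :
    b*d = -(d*b) ∧ a*e = -(e*a) ∧ (e*a)*(e*a) = -1 := by
  have hc : c = b * a := by
    have h' : a*(b*c) = 1 := by rw [← mul_assoc]; exact r0
    have := solve3 sa sb h'; simpa using this
  have hf : f = e * d := by
    have h' : d*(e*f) = 1 := by rw [← mul_assoc]; exact r1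
    have := solve3 sd se h'; simpa using this
  have hg : g = -(d * a) := by
    have h' : a*(d*g) = -1 := by rw [← mul_assoc]; exact c0
    have := solve3 sa sd h'; simpa using this
  have hh : h = -(e * b) := by
    have h' : b*(e*h) = -1 := by rw [← mul_assoc]; exact c1
    have := solve3 sb se h'; simpa using this
  have hk1 : k = h * g := by
    have h' : g*(h*k) = 1 := by rw [← mul_assoc]; exact r2
    have := solve3 sg sh h'; simpa using this
  have hk2 : k = -(f * c) := by
    have h' : c*(f*k) = -1 := by rw [← mul_assoc]; exact c2
    have := solve3 sc sf h'; simpa using this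
  have EQ0 : h * g = -(f * c) := hk1 ▸ hk2
  have EQ0' : g * h = -(f * c) := by rw [cgh]; exact EQ0
  -- first: b*d = -(d*b)
  have EQA : e*(b*(d*a)) = -(e*(d*(b*a))) := by
    rw [hg, hh, hf, hc] at EQ0
    simp only [neg_mul, mul_neg, neg_neg, mul_assoc] at EQ0
    exact EQ0
  have hbd : b*d = -(d*b) := by
    have h1 : b*(d*a) = -(d*(b*a)) := by
      have := congrArg (fun t => e * t) EQA
      simpa only [sq_cancel se, mul_neg] using this
    have h2 : (b*d)*a = (-(d*b))*a := by
      simpa only [neg_mul, mul_assoc] using h1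
    exact cancel_right sa h2
  -- second: a*e = -(e*a)
  have EQB : d*(a*(e*b)) = -(e*(d*(b*a))) := by
    rw [hg, hh, hf, hc] at EQ0'
    simp only [neg_mul, mul_neg, neg_neg, mul_assoc] at EQ0'
    exact EQ0'
  have hae : a*e = -(e*a) := by
    have h1 : d*(a*(e*(b*b))) = -(e*(d*(b*(a*b)))) := by
      have := congrArg (fun t => t * b) EQB
      simpa only [mul_assoc, neg_mul] using this
    rw [cab, sq_cancel sb a, sb, mul_one] at h1
    -- h1 : d*(a*e) = -(e*(d*a))
    have h2 : (a*e)*d = (-(e*a))*d := by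
      calc (a*e)*d = a*(e*d) := by rw [mul_assoc]
        _ = a*(d*e) := by rw [cde]
        _ = (a*d)*e := by rw [mul_assoc]
        _ = (d*a)*e := by rw [cad]
        _ = d*(a*e) := by rw [mul_assoc]
        _ = -(e*(d*a)) := h1
        _ = -(e*(a*d)) := by rw [cad]
        _ = (-(e*a))*d := by rw [neg_mul, mul_assoc]
    exact cancel_right sd h2
  refine ⟨hbd, hae, ?_⟩
  calc (e*a)*(e*a) = e*((a*e)*a) := by simp only [mul_assoc]
    _ = e*((-(e*a))*a) := by rw [hae]
    _ = -(e*(e*(a*a))) := by simp only [neg_mul, mul_neg, mul_assoc]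
    _ = -1 := by rw [sa, mul_one, se]


lemma even_finrank_of_sq_neg_one {V : Type*} [AddCommGroup V] [Module ℂ V]
    [FiniteDimensional ℂ V] {a e : Module.End ℂ V}
    (sa : a*a = 1) (se : e*e = 1) (hsq : (e*a)*(e*a) = -1) :
    Even (Module.finrank ℂ V) := by
  have hdet : LinearMap.det ((e*a)*(e*a)) = LinearMap.det (-1 : Module.End ℂ V) := by rw [hsq]
  have hdmul : ∀ f g : Module.End ℂ V, LinearMap.det (f * g) =
      LinearMap.det f * LinearMap.det g := by
    intro f g; rw [Module.End.mul_eq_comp, LinearMap.det_comp]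
  have hone : LinearMap.det (1 : Module.End ℂ V) = 1 := by
    simp
  have he : LinearMap.det e * LinearMap.det e = 1 := by rw [← hdmul, se, hone]
  have ha : LinearMap.det a * LinearMap.det a = 1 := by rw [← hdmul, sa, hone]
  have hL : LinearMap.det ((e*a)*(e*a)) = 1 := by
    rw [hdmul, hdmul]
    calc (LinearMap.det e * LinearMap.det a) * (LinearMap.det e * LinearMap.det a)
        = (LinearMap.det e * LinearMap.det e) * (LinearMap.det a * LinearMap.det a) := by ring
      _ = 1 := by rw [he, ha, one_mul]
  have hR : LinearMap.det (-1 : Module.End ℂ V) = (-1 : ℂ) ^ Module.finrank ℂ V := by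
    have h1 : (-1 : Module.End ℂ V) = (-1 : ℂ) • (LinearMap.id : V →ₗ[ℂ] V) := by
      ext x; simp
    rw [h1, LinearMap.det_smul, LinearMap.det_id, mul_one]
  rw [hL, hR] at hdet
  exact (neg_one_pow_eq_one_iff_even (by norm_num : (-1 : ℂ) ≠ 1)).mp hdet.symm

lemma rank_two_contra {V : Type*} [AddCommGroup V] [Module ℂ V] [FiniteDimensional ℂ V]
    (hV : Module.finrank ℂ V = 2) {a b d e : Module.End ℂ V}
    (sa : a*a = 1) (sb : b*b = 1) (sd : d*d = 1) (se : e*e = 1)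
    (cab : a*b = b*a) (cad : a*d = d*a)
    (hbd : b*d = -(d*b)) (hae : a*e = -(e*a)) : False := by
  have hnt : Nontrivial V := Module.finrank_pos_iff.mp (by rw [hV]; norm_num)
  obtain ⟨w, hw⟩ := exists_ne (0 : V)
  have hene : e ≠ 0 := by
    intro h0
    have h1 : (1 : Module.End ℂ V) = 0 := by rw [← se, h0, mul_zero]
    exact hw (by simpa using congrFun (congrArg DFunLike.coe h1) w)
  have htorsion : ∀ x : Module.End ℂ V, -x = x → x = 0 := by
    intro x hx
    have h2 : (2 : ℂ) • x = 0 := by rw [two_smul]; nth_rewrite 1 [← hx]; exact neg_add_cancel x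
    rcases smul_eq_zero.mp h2 with h | h
    · norm_num at h
    · exact h
  set E := LinearMap.ker (a - 1) with hE
  have hEbot : E ≠ ⊥ := by
    intro hb
    have hinj : Function.Injective ⇑(a - 1) := LinearMap.ker_eq_bot.mp hb
    have hmul : (a - 1) * (a + 1) = 0 := by
      have h1 : (a - 1) * (a + 1) = a*a - 1 := by noncomm_ring
      rw [h1, sa, sub_self]
    have ha1 : a + 1 = 0 := by
      ext x
      have h2 : (a - 1) ((a + 1) x) = (a - 1) 0 := by
        have h3 := congrFun (congrArg DFunLike.coe hmul) x
        simpa [Module.End.mul_eq_comp] using h3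
      simpa using hinj h2
    have haneg : a = -1 := by linear_combination (norm := abel) ha1
    apply hene
    apply htorsion
    have h1 : a * e = -e := by rw [haneg]; noncomm_ring
    have h2 : e * a = -e := by rw [haneg]; noncomm_ring
    rw [hae, h2] at h1
    simpa using h1.symm
  have hEtop : E ≠ ⊤ := by
    intro ht
    have ha0 : a - 1 = 0 := LinearMap.ker_eq_top.mp ht
    have ha1 : a = 1 := by linear_combination (norm := abel) ha0
    apply hene
    apply htorsion
    have h1 : a * e = e := by rw [ha1]; noncomm_ring
    have h2 : e * a = e := by rw [ha1]; noncomm_ring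
    rw [hae, h2] at h1
    exact h1

  have hfr : Module.finrank ℂ E = 1 := by
    have h1 : 0 < Module.finrank ℂ E :=
      Module.finrank_pos_iff.mpr (Submodule.nontrivial_iff_ne_bot.mpr hEbot)
    have h2 : Module.finrank ℂ E < 2 := hV ▸ Submodule.finrank_lt hEtop
    omega
  obtain ⟨v, hvE, hv0⟩ := (Submodule.ne_bot_iff E).mp hEbot
  have hav : a v = v := by
    have h1 : (a - 1) v = 0 := hvE
    have h2 : a v - v = 0 := by simpa using h1
    exact sub_eq_zero.mp h2
  have hspan : Submodule.span ℂ {v} = E := by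
    apply Submodule.eq_of_le_of_finrank_le
    · exact (Submodule.span_singleton_le_iff_mem v E).mpr hvE
    · rw [hfr, finrank_span_singleton hv0]
  have hmemE : ∀ x : Module.End ℂ V, x * a = a * x → x v ∈ E := by
    intro x hx
    have h1 : a (x v) = x v := by
      have h2 : (a * x) v = (x * a) v := by rw [hx]
      simpa [Module.End.mul_apply, hav] using h2
    show (a - 1) (x v) = 0
    simp [h1]
  obtain ⟨μ, hμ⟩ := Submodule.mem_span_singleton.mp (hspan ▸ hmemE b cab.symm)
  obtain ⟨ν, hν⟩ := Submodule.mem_span_singleton.mp (hspan ▸ hmemE d cad.symm)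
  have hμ0 : μ ≠ 0 := by
    intro h0
    rw [h0, zero_smul] at hμ
    have h1 : v = 0 := by
      have h2 : (b * b) v = v := by rw [sb]; simp
      rw [Module.End.mul_apply, ← hμ, map_zero] at h2
      exact h2.symm
    exact hv0 h1
  have hν0 : ν ≠ 0 := by
    intro h0
    rw [h0, zero_smul] at hν
    have h1 : v = 0 := by
      have h2 : (d * d) v = v := by rw [sd]; simp
      rw [Module.End.mul_apply, ← hν, map_zero] at h2
      exact h2.symm
    exact hv0 h1
  have hfin : (ν * μ) • v = -((μ * ν) • v) := by
    have h1 : (b * d) v = (-(d * b)) v := by rw [hbd]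
    have h2 : (b * d) v = (ν * μ) • v := by
      rw [Module.End.mul_apply, ← hν, _root_.map_smul, ← hμ, smul_smul]
    have h3 : (d * b) v = (μ * ν) • v := by
      rw [Module.End.mul_apply, ← hμ, _root_.map_smul, ← hν, smul_smul]
    rw [h2] at h1; rw [h1]; simp [h3]
  have : (2 * (μ * ν)) • v = 0 := by
    have : (ν * μ) • v + (μ * ν) • v = 0 := by rw [hfin]; abel
    rw [← add_smul] at this
    convert this using 2
    ring
  rcases smul_eq_zero.mp this with h | h
  · exact (mul_ne_zero two_ne_zero (mul_ne_zero hμ0 hν0)) h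
  · exact hv0 h

set_option maxHeartbeats 1000000 in
/-- the Schmidt rank of any perfect quantum solution state of the `3 × 3`
quantum magic square game is at least `4`: the coefficient matrix `M p q = ψ (p, q)` has
rank at least `4`. -/
theorem magic_square_pqss_schmidt_rank_ge_four
    {dA dB : ℕ}
    (A : Fin 3 → Fin 3 → Matrix (Fin dA) (Fin dA) ℂ)
    (B : Fin 3 → Fin 3 → Matrix (Fin dB) (Fin dB) ℂ)
    (ψ : Fin dA × Fin dB → ℂ)
    (h : IsPerfectStrategy A B ψ) :
    4 ≤ (Matrix.of fun (p : Fin dA) (q : Fin dB) => ψ (p, q)).rank := by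
  obtain ⟨hAH, hA2, hArowc, hArowp, hBH, hB2, hBcolc, hBcolp, hnorm, hperf⟩ := h
  set M : Matrix (Fin dA) (Fin dB) ℂ := Matrix.of fun p q => ψ (p, q) with hM
  -- triple-product forms of the row/column conditions
  have hArow3 : ∀ i, A i 0 * A i 1 * A i 2 = 1 := by
    intro i
    have := hArowp i
    simpa [List.ofFn_succ, mul_assoc] using this
  have hBcol3 : ∀ j, B 0 j * B 1 j * B 2 j = -1 := by
    intro j
    have := hBcolp j
    simpa [List.ofFn_succ, mul_assoc] using this
  -- Step 1: the strategy operators fix ψ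
  have hfix : ∀ i j, (A i j ⊗ₖ B i j) *ᵥ ψ = ψ := by
    intro i j
    have hH : (A i j ⊗ₖ B i j)ᴴ = A i j ⊗ₖ B i j := by
      rw [kron_conjT, hAH i j, hBH i j]
    have hU : (A i j ⊗ₖ B i j)ᴴ * (A i j ⊗ₖ B i j) = 1 := by
      rw [hH, ← Matrix.mul_kronecker_mul, hA2 i j, hB2 i j, Matrix.one_kronecker_one]
    exact fix_of_inner_one hU hH hnorm (hperf i j)
  -- Step 2: matrix form
  have hMeq : ∀ i j, A i j * M * (B i j)ᵀ = M := by
    intro i j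
    ext p q
    rw [← kron_mulVec, hfix i j]
    rfl
  have hAM : ∀ i j, A i j * M = M * (B i j)ᵀ := by
    intro i j
    calc A i j * M = A i j * M * (1 : Matrix (Fin dB) (Fin dB) ℂ) := by rw [Matrix.mul_one]
      _ = A i j * M * ((B i j)ᵀ * (B i j)ᵀ) := by
          rw [← Matrix.transpose_mul, hB2 i j, Matrix.transpose_one]
      _ = (A i j * M * (B i j)ᵀ) * (B i j)ᵀ := by rw [Matrix.mul_assoc (A i j * M)]
      _ = M * (B i j)ᵀ := by rw [hMeq i j]
  set N : Matrix (Fin dB) (Fin dA) ℂ := Mᵀ with hN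
  have hBN : ∀ i j, B i j * N = N * (A i j)ᵀ := by
    intro i j
    have h1 := congrArg Matrix.transpose (hAM i j)
    rw [transpose_mul, transpose_mul, transpose_transpose] at h1
    exact h1.symm
  -- Step 3: the invariant subspace
  set V : Submodule ℂ (Fin dB → ℂ) := LinearMap.range N.mulVecLin with hV
  have hrank : Module.finrank ℂ V = M.rank := by
    rw [← Matrix.rank_transpose M]
    rfl
  have hinv : ∀ i j, ∀ v ∈ V, (B i j).mulVecLin v ∈ V := by
    rintro i j v ⟨x, rfl⟩
    refine ⟨(A i j)ᵀ.mulVecLin x, ?_⟩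
    simp only [Matrix.mulVecLin_apply, Matrix.mulVec_mulVec]
    rw [← hBN i j]
  set β : Fin 3 → Fin 3 → Module.End ℂ V :=
    fun i j => LinearMap.restrict (B i j).mulVecLin (hinv i j) with hβ
  have hcoe : ∀ (i j : Fin 3) (z : V), ((β i j z : Fin dB → ℂ)) = B i j *ᵥ (z : Fin dB → ℂ) :=
    fun i j z => rfl
  -- End-level relations
  have sq : ∀ i j, β i j * β i j = 1 := by
    intro i j
    refine LinearMap.ext fun z => Subtype.ext ?_
    show B i j *ᵥ (B i j *ᵥ (z : Fin dB → ℂ)) = (z : Fin dB → ℂ)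
    rw [Matrix.mulVec_mulVec, hB2 i j, Matrix.one_mulVec]
  have colc : ∀ i i' j, β i j * β i' j = β i' j * β i j := by
    intro i i' j
    refine LinearMap.ext fun z => Subtype.ext ?_
    show B i j *ᵥ (B i' j *ᵥ (z : Fin dB → ℂ)) = B i' j *ᵥ (B i j *ᵥ (z : Fin dB → ℂ))
    rw [Matrix.mulVec_mulVec, Matrix.mulVec_mulVec, hBcolc i i' j]
  have colp : ∀ j, β 0 j * β 1 j * β 2 j = -1 := by
    intro j
    refine LinearMap.ext fun z => Subtype.ext ?_
    show B 0 j *ᵥ (B 1 j *ᵥ (B 2 j *ᵥ (z : Fin dB → ℂ))) = -(z : Fin dB → ℂ)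
    rw [Matrix.mulVec_mulVec, Matrix.mulVec_mulVec, hBcol3 j]
    simp [Matrix.neg_mulVec, Matrix.one_mulVec]
  have httr : ∀ i j j', (A i j)ᵀ * (A i j')ᵀ = (A i j')ᵀ * (A i j)ᵀ := by
    intro i j j'
    have h1 := congrArg Matrix.transpose (hArowc i j j')
    rw [Matrix.transpose_mul, Matrix.transpose_mul] at h1
    exact h1.symm
  have hword2 : ∀ i j j', B i j * (B i j' * N) = N * ((A i j)ᵀ * (A i j')ᵀ) := by
    intro i j j'
    rw [hBN i j', ← Matrix.mul_assoc, hBN i j, Matrix.mul_assoc]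
  have rowc : ∀ i j j', β i j * β i j' = β i j' * β i j := by
    intro i j j'
    refine LinearMap.ext fun z => Subtype.ext ?_
    obtain ⟨x, hx⟩ := z.2
    show B i j *ᵥ (B i j' *ᵥ (z : Fin dB → ℂ)) = B i j' *ᵥ (B i j *ᵥ (z : Fin dB → ℂ))
    rw [← hx]
    show B i j *ᵥ (B i j' *ᵥ (N *ᵥ x)) = B i j' *ᵥ (B i j *ᵥ (N *ᵥ x))
    simp only [Matrix.mulVec_mulVec]
    rw [← Matrix.mul_assoc, ← Matrix.mul_assoc, Matrix.mul_assoc (B i j),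
      Matrix.mul_assoc (B i j'), hword2 i j j', hword2 i j' j, httr]
  have hA3rev : ∀ i, A i 2 * A i 1 * A i 0 = 1 := by
    intro i
    calc A i 2 * A i 1 * A i 0 = A i 1 * A i 2 * A i 0 := by rw [hArowc i 2 1]
      _ = A i 1 * (A i 2 * A i 0) := by rw [mul_assoc]
      _ = A i 1 * (A i 0 * A i 2) := by rw [hArowc i 2 0]
      _ = A i 1 * A i 0 * A i 2 := by rw [mul_assoc]
      _ = A i 0 * A i 1 * A i 2 := by rw [hArowc i 1 0]
      _ = 1 := hArow3 i
  have hword3 : ∀ i, B i 0 * (B i 1 * (B i 2 * N)) = N := by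
    intro i
    rw [hBN i 2, ← Matrix.mul_assoc (B i 1), hBN i 1, Matrix.mul_assoc,
        ← Matrix.mul_assoc (B i 0), hBN i 0, Matrix.mul_assoc]
    have h2 : (A i 0)ᵀ * ((A i 1)ᵀ * (A i 2)ᵀ) = 1 := by
      rw [← Matrix.transpose_mul, ← Matrix.transpose_mul, hA3rev i, Matrix.transpose_one]
    rw [h2, Matrix.mul_one]
  have rowp : ∀ i, β i 0 * β i 1 * β i 2 = 1 := by
    intro i
    refine LinearMap.ext fun z => Subtype.ext ?_
    obtain ⟨x, hx⟩ := z.2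
    show B i 0 *ᵥ (B i 1 *ᵥ (B i 2 *ᵥ (z : Fin dB → ℂ))) = (z : Fin dB → ℂ)
    rw [← hx]
    show B i 0 *ᵥ (B i 1 *ᵥ (B i 2 *ᵥ (N *ᵥ x))) = N *ᵥ x
    simp only [Matrix.mulVec_mulVec]
    rw [hword3 i]
  obtain ⟨hbd, hae, hsq2⟩ := magic_core (R := Module.End ℂ V) (sq 0 0) (sq 0 1) (sq 0 2) (sq 1 0) (sq 1 1) (sq 1 2)
    (sq 2 0) (sq 2 1) (rowc 0 0 1) (colc 0 1 0) (rowc 1 0 1) (rowc 2 0 1)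
    (rowp 0) (rowp 1) (rowp 2) (colp 0) (colp 1) (colp 2)
  have heven : Even (Module.finrank ℂ V) :=
    even_finrank_of_sq_neg_one (sq 0 0) (sq 1 1) hsq2
  -- rank ≠ 0
  have hne0 : Module.finrank ℂ V ≠ 0 := by
    intro h0
    have hVbot : V = ⊥ := Submodule.finrank_eq_zero.mp h0
    have hψ0 : ψ = 0 := by
      funext pq
      obtain ⟨p, q⟩ := pq
      have hmem : N *ᵥ Pi.single p 1 ∈ V := ⟨Pi.single p 1, rfl⟩
      rw [hVbot, Submodule.mem_bot] at hmem
      have : (N *ᵥ Pi.single p 1) q = 0 := by rw [hmem]; rfl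
      simpa [Matrix.mulVec, dotProduct, Pi.single_apply, hN, hM] using this
    rw [hψ0] at hnorm
    simp [dotProduct] at hnorm
  rw [← hrank]
  by_contra hlt
  push_neg at hlt
  obtain ⟨t, ht⟩ := heven
  have h2 : Module.finrank ℂ V = 2 := by omega
  exact rank_two_contra h2 (sq 0 0) (sq 0 1) (sq 1 0) (sq 1 1) (rowc 0 0 1) (colc 0 1 0)
    hbd hae
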